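/- The 3-path ideal of a path graph is normally torsion-free: for n ≥ 3, the ideal L = (x_i x_{i+1} x_{i+2} : i = 1,...,n−2) ⊂ K[x_1,...,x_n] is normally torsion-free. -/

import Mathlib

open MvPolynomial

/-- `I` is normally torsion-free. -/
def NormallyTorsionFree {R : Type*} [CommRing R] (I : Ideal R) : Prop :=
  ∀ k : ℕ, 1 ≤ k → associatedPrimes R (R ⧸ I ^ k) ⊆ associatedPrimes R (R ⧸ I)

open Finsupp


namespace PathNTF

variable {n : ℕ}

/-- Edge index: `i` with `i+2 < n`, representing the 3-path `{i, i+1, i+2}`. -/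
abbrev EIdx (n : ℕ) := {i : ℕ // i + 2 < n}

/-- The exponent vector of the edge monomial. -/
noncomputable def ev (e : EIdx n) : Fin n →₀ ℕ :=
  single ⟨e.1, by omega⟩ 1 + single ⟨e.1 + 1, by omega⟩ 1 + single ⟨e.1 + 2, e.2⟩ 1

/-- Vertex `j` lies in edge `e`. -/
def win (e : EIdx n) (j : Fin n) : Prop := e.1 ≤ j.1 ∧ j.1 ≤ e.1 + 2

instance (e : EIdx n) (j : Fin n) : Decidable (win e j) := instDecidableAnd

lemma ev_apply (e : EIdx n) (j : Fin n) :
    ev e j = if win e j then 1 else 0 := by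
  have he := e.2
  have hj := j.2
  by_cases hw : win e j
  · rw [if_pos hw]
    simp only [ev, Finsupp.add_apply, single_apply, Fin.ext_iff, win] at hw ⊢
    split_ifs <;> omega
  · rw [if_neg hw]
    simp only [ev, Finsupp.add_apply, single_apply, Fin.ext_iff, win] at hw ⊢
    split_ifs <;> omega

lemma ev_apply_of_win (e : EIdx n) (j : Fin n) (h : win e j) : ev e j = 1 := by
  rw [ev_apply, if_pos h]

lemma ev_apply_of_not_win (e : EIdx n) (j : Fin n) (h : ¬ win e j) : ev e j = 0 := by
  rw [ev_apply, if_neg h]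

/-- `C` covers all edges with index `≥ s`. -/
def Covers (s : ℕ) (C : Finset (Fin n)) : Prop := ∀ e : EIdx n, s ≤ e.1 → ∃ j ∈ C, win e j

/-- There is a packing of `k` edges, all of index `≥ s`, within capacity `a`. -/
def Pack (s k : ℕ) (a : Fin n →₀ ℕ) : Prop :=
  ∃ l : Multiset (EIdx n), (∀ e ∈ l, s ≤ e.1) ∧ Multiset.card l = k ∧ (l.map ev).sum ≤ a

/-- Weak duality / counting bound. -/
lemma count_le (l : Multiset (EIdx n)) (C : Finset (Fin n)) (a : Fin n →₀ ℕ)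
    (hcov : ∀ e ∈ l, ∃ j ∈ C, win e j) (hle : (l.map ev).sum ≤ a) :
    Multiset.card l ≤ ∑ j ∈ C, a j := by
  have key : ∀ (l : Multiset (EIdx n)), (∀ e ∈ l, ∃ j ∈ C, win e j) →
      Multiset.card l ≤ ∑ j ∈ C, ((l.map ev).sum) j := by
    intro l hcov
    induction l using Multiset.induction with
    | empty => simp
    | cons e l ih =>
      have h1 : 1 ≤ ∑ j ∈ C, ev e j := by
        obtain ⟨j, hjC, hwin⟩ := hcov e (Multiset.mem_cons_self e l)
        calc 1 = ev e j := (ev_apply_of_win e j hwin).symm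
        _ ≤ ∑ j ∈ C, ev e j := Finset.single_le_sum (fun _ _ => Nat.zero_le _) hjC
      have h2 := ih (fun e' he' => hcov e' (Multiset.mem_cons_of_mem he'))
      calc Multiset.card (e ::ₘ l) = 1 + Multiset.card l := by
            rw [Multiset.card_cons]; omega
      _ ≤ (∑ j ∈ C, ev e j) + ∑ j ∈ C, ((l.map ev).sum) j := Nat.add_le_add h1 h2
      _ = ∑ j ∈ C, (((e ::ₘ l).map ev).sum) j := by
            rw [← Finset.sum_add_distrib]
            refine Finset.sum_congr rfl fun j _ => ?_
            rw [Multiset.map_cons, Multiset.sum_cons, Finsupp.add_apply]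
  exact (key l hcov).trans (Finset.sum_le_sum fun j _ => hle j)

lemma pack_mono_idx {s s' k : ℕ} {a : Fin n →₀ ℕ} (h : Pack s' k a) (hss : s ≤ s') :
    Pack s k a := by
  obtain ⟨l, h1, h2, h3⟩ := h
  exact ⟨l, fun e he => hss.trans (h1 e he), h2, h3⟩

lemma multiset_sum_le_of_le {α : Type*} [AddCommMonoid α] [PartialOrder α] [IsOrderedAddMonoid α] [CanonicallyOrderedAdd α]
    {s t : Multiset α} (h : s ≤ t) : s.sum ≤ t.sum := by
  obtain ⟨u, rfl⟩ := Multiset.le_iff_exists_add.mp h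
  simp

lemma pack_succ {s k : ℕ} {a : Fin n →₀ ℕ} (h : Pack s (k+1) a) : Pack s k a := by
  obtain ⟨l, h1, h2, h3⟩ := h
  have hne : l ≠ 0 := by intro h0; rw [h0] at h2; simp at h2
  obtain ⟨e, he⟩ := Multiset.exists_mem_of_ne_zero hne
  refine ⟨l.erase e, fun e' he' => h1 e' (Multiset.mem_of_mem_erase he'), ?_, ?_⟩
  · rw [Multiset.card_erase_of_mem he, h2]; rfl
  · exact (multiset_sum_le_of_le (Multiset.map_le_map (Multiset.erase_le e l))).trans h3

lemma pack_mono_card {s m : ℕ} {a : Fin n →₀ ℕ} :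
    ∀ {k}, Pack s k a → m ≤ k → Pack s m a := by
  intro k
  induction k with
  | zero => intro h hm; rwa [Nat.le_zero.mp hm]
  | succ k ih =>
    intro h hm
    rcases eq_or_lt_of_le hm with rfl | hlt
    · exact h
    · exact ih (pack_succ h) (by omega)

lemma exists_min_subcover (s : ℕ) : ∀ (C : Finset (Fin n)), Covers s C →
    ∃ C' ⊆ C, Covers s C' ∧ ∀ j ∈ C', ¬ Covers s (C'.erase j) := by
  intro C
  induction C using Finset.strongInduction with
  | _ C ih =>
    intro h
    by_cases hex : ∃ j ∈ C, Covers s (C.erase j)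
    · obtain ⟨j, hj, hcov⟩ := hex
      obtain ⟨C', hsub, h1, h2⟩ := ih (C.erase j) (Finset.erase_ssubset hj) hcov
      exact ⟨C', hsub.trans (Finset.erase_subset _ _), h1, h2⟩
    · exact ⟨C, Finset.Subset.refl _, h, fun j hj hcov => hex ⟨j, hj, hcov⟩⟩

lemma sum_single_apply_one (x : Fin n) : ∑ j : Fin n, (single x 1 : Fin n →₀ ℕ) j = 1 := by
  simp [single_apply]

/-- Strong LP duality for the 3-interval hypergraph of the path. -/
lemma dual : ∀ (fuel s : ℕ) (a : Fin n →₀ ℕ), (n - s) + (∑ j, a j) ≤ fuel →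
    ∃ C : Finset (Fin n), Covers s C ∧ Pack s (∑ j ∈ C, a j) a := by
  intro fuel
  induction fuel with
  | zero =>
    intro s a hf
    refine ⟨∅, fun e he => absurd e.2 (by omega), ?_⟩
    exact ⟨0, by simp, by simp, by simp⟩
  | succ N ih =>
    intro s a hf
    by_cases hs : s + 2 < n
    · have aux : ∀ v (hvn : v < n), s ≤ v → v ≤ s + 2 → a ⟨v, hvn⟩ = 0 →
          ∃ C : Finset (Fin n), Covers s C ∧ Pack s (∑ j ∈ C, a j) a := by
        intro v hvn hsv hv2 hva
        have hval : ((⟨v, hvn⟩ : Fin n) : ℕ) = v := rfl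
        have hrec : (n - (v+1)) + (∑ j, a j) ≤ N := by omega
        obtain ⟨C', hcov', hpack'⟩ := ih (v+1) a hrec
        refine ⟨insert ⟨v, hvn⟩ C', ?_, ?_⟩
        · intro e hse
          by_cases hev : v + 1 ≤ e.1
          · obtain ⟨j, hj, hw⟩ := hcov' e hev
            exact ⟨j, Finset.mem_insert_of_mem hj, hw⟩
          · exact ⟨⟨v, hvn⟩, Finset.mem_insert_self _ _, by omega, by omega⟩
        · have hsum : ∑ j ∈ insert (⟨v, hvn⟩ : Fin n) C', a j = ∑ j ∈ C', a j := by
            by_cases hmem : (⟨v, hvn⟩ : Fin n) ∈ C'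
            · rw [Finset.insert_eq_self.mpr hmem]
            · rw [Finset.sum_insert hmem, hva, zero_add]
          rw [hsum]
          exact pack_mono_idx hpack' (by omega)
      by_cases h0 : a ⟨s, by omega⟩ = 0 ∨ a ⟨s+1, by omega⟩ = 0 ∨ a ⟨s+2, hs⟩ = 0
      · rcases h0 with h0 | h0 | h0
        · exact aux s (by omega) le_rfl (by omega) h0
        · exact aux (s+1) (by omega) (by omega) (by omega) h0
        · exact aux (s+2) (by omega) (by omega) le_rfl h0
      · push_neg at h0
        obtain ⟨h01, h02, h03⟩ := h0
        set e₀ : EIdx n := ⟨s, hs⟩ with he₀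
        have he₀val : (e₀.1 : ℕ) = s := rfl
        have hle : ∀ j, ev e₀ j ≤ a j := by
          intro j
          rw [ev_apply]
          split_ifs with hw
          · obtain ⟨hw1, hw2⟩ := hw
            have : j.1 = s ∨ j.1 = s + 1 ∨ j.1 = s + 2 := by omega
            rcases this with hv | hv | hv
            · have hj : j = (⟨s, by omega⟩ : Fin n) := Fin.ext hv
              rw [hj]; exact Nat.one_le_iff_ne_zero.mpr h01
            · have hj : j = (⟨s+1, by omega⟩ : Fin n) := Fin.ext hv
              rw [hj]; exact Nat.one_le_iff_ne_zero.mpr h02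
            · have hj : j = (⟨s+2, hs⟩ : Fin n) := Fin.ext hv
              rw [hj]; exact Nat.one_le_iff_ne_zero.mpr h03
          · exact Nat.zero_le _
        set a' : Fin n →₀ ℕ := a - ev e₀ with ha'
        have hca : ∀ j, a' j = a j - ev e₀ j := fun j => tsub_apply a (ev e₀) j
        have hsum3 : ∑ j, ev e₀ j = 3 := by
          simp only [ev]
          simp only [Finsupp.add_apply]
          rw [Finset.sum_add_distrib, Finset.sum_add_distrib,
            sum_single_apply_one, sum_single_apply_one, sum_single_apply_one]
        have hsa : (∑ j, a' j) + 3 = ∑ j, a j := by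
          rw [← hsum3, ← Finset.sum_add_distrib]
          refine Finset.sum_congr rfl fun j _ => ?_
          have := hle j
          rw [hca j]
          omega
        have hrec : (n - s) + (∑ j, a' j) ≤ N := by omega
        obtain ⟨C₁, hcov₁, hpack₁⟩ := ih s a' hrec
        obtain ⟨C, hCsub, hCcov, hCmin⟩ := exists_min_subcover s C₁ hcov₁
        have hw'' : ∑ j ∈ C, a' j ≤ ∑ j ∈ C₁, a' j :=
          Finset.sum_le_sum_of_subset hCsub
        have hpack₂ : Pack s (∑ j ∈ C, a' j) a' := pack_mono_card hpack₁ hw''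
        obtain ⟨j₀, hj₀C, hj₀w⟩ := hCcov e₀ le_rfl
        have herase : ∀ j ∈ C, ∀ j' ∈ C, win e₀ j → win e₀ j' → j.1 < j'.1 →
            Covers s (C.erase j) := by
          intro j hj j' hj' hwj hwj' hlt e hse
          obtain ⟨j₂, hj₂, hw₂⟩ := hCcov e hse
          by_cases hjj : j₂ = j
          · subst hjj
            refine ⟨j', Finset.mem_erase.mpr ⟨Fin.ne_of_val_ne (by omega), hj'⟩, ?_, ?_⟩
            · obtain ⟨hA, hB⟩ := hw₂
              omega
            · obtain ⟨hA, hB⟩ := hwj'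
              omega
          · exact ⟨j₂, Finset.mem_erase.mpr ⟨hjj, hj₂⟩, hw₂⟩
        have huniq : ∀ j ∈ C, win e₀ j → j = j₀ := by
          intro j hj hw
          by_contra hne
          rcases lt_trichotomy j.1 j₀.1 with hlt | heq | hgt
          · exact hCmin j hj (herase j hj j₀ hj₀C hw hj₀w hlt)
          · exact hne (Fin.ext heq)
          · exact hCmin j₀ hj₀C (herase j₀ hj₀C j hj hj₀w hw hgt)
        have hwt : ∑ j ∈ C, a j = (∑ j ∈ C, a' j) + 1 := by
          have hstep : ∀ j ∈ C, a j = a' j + ev e₀ j := by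
            intro j _
            have := hle j
            rw [hca j]
            omega
          rw [Finset.sum_congr rfl hstep, Finset.sum_add_distrib]
          congr 1
          have hite : ∀ j ∈ C, ev e₀ j = if j = j₀ then 1 else 0 := by
            intro j hj
            by_cases hw : win e₀ j
            · rw [ev_apply_of_win _ _ hw, if_pos (huniq j hj hw)]
            · rw [ev_apply_of_not_win _ _ hw, if_neg (fun h => hw (by rw [h]; exact hj₀w))]
          rw [Finset.sum_congr rfl hite, Finset.sum_ite_eq' C j₀ (fun _ => 1),
            if_pos hj₀C]
        obtain ⟨l, hl1, hl2, hl3⟩ := hpack₂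
        refine ⟨C, hCcov, ?_⟩
        rw [hwt]
        refine ⟨e₀ ::ₘ l, ?_, by simp [hl2], ?_⟩
        · intro e he
          rcases Multiset.mem_cons.mp he with rfl | he
          · exact le_rfl
          · exact hl1 e he
        · rw [Multiset.map_cons, Multiset.sum_cons]
          intro j
          have h3 := hl3 j
          rw [hca j] at h3
          have := hle j
          rw [Finsupp.add_apply]
          omega
    · refine ⟨∅, fun e he => absurd e.2 (by omega), ?_⟩
      exact ⟨0, by simp, by simp, by simp⟩

variable {K : Type*} [Field K] {n : ℕ}

/-- `v` lies in the staircase of the monomial set `A`. -/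
def stair (A : Set (Fin n →₀ ℕ)) (v : Fin n →₀ ℕ) : Prop := ∃ d ∈ A, d ≤ v

/-- The monomial ideal with exponent set `A`. -/
noncomputable def mIdeal (K : Type*) [Field K] {n : ℕ} (A : Set (Fin n →₀ ℕ)) :
    Ideal (MvPolynomial (Fin n) K) :=
  Ideal.span ((fun d => monomial d (1 : K)) '' A)

lemma mem_mIdeal_iff {A : Set (Fin n →₀ ℕ)} {r : MvPolynomial (Fin n) K} :
    r ∈ mIdeal K A ↔ ∀ v ∈ r.support, stair A v :=
  mem_ideal_span_monomial_image

lemma monomial_mem_mIdeal_iff {A : Set (Fin n →₀ ℕ)} {c : Fin n →₀ ℕ} :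
    (monomial c (1:K)) ∈ mIdeal K A ↔ stair A c := by
  rw [mem_mIdeal_iff]
  constructor
  · intro hc
    refine hc c ?_
    rw [MvPolynomial.mem_support_iff, coeff_monomial, if_pos rfl]
    exact one_ne_zero
  · intro hc v hv
    rw [MvPolynomial.mem_support_iff, coeff_monomial] at hv
    split_ifs at hv with heq
    · exact heq ▸ hc
    · exact absurd rfl hv

lemma monomial_mul_mem_iff {A : Set (Fin n →₀ ℕ)} {u : Fin n →₀ ℕ}
    {r : MvPolynomial (Fin n) K} :
    (monomial u (1:K)) * r ∈ mIdeal K A ↔ ∀ v ∈ r.support, stair A (u + v) := by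
  rw [mem_mIdeal_iff]
  constructor
  · intro hmem v hv
    refine hmem (u + v) ?_
    rw [MvPolynomial.mem_support_iff, coeff_monomial_mul, one_mul]
    exact MvPolynomial.mem_support_iff.mp hv
  · intro hstair w hw
    rw [MvPolynomial.mem_support_iff, coeff_monomial_mul'] at hw
    split_ifs at hw with hle
    · rw [one_mul] at hw
      have := hstair (w - u) (MvPolynomial.mem_support_iff.mpr hw)
      rwa [add_tsub_cancel_of_le hle] at this
    · exact absurd rfl hw

open Classical in
/-- Strip off all monomials lying in the staircase. -/
noncomputable def red (A : Set (Fin n →₀ ℕ)) (g : MvPolynomial (Fin n) K) :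
    MvPolynomial (Fin n) K :=
  ∑ v ∈ g.support.filter (fun v => ¬ stair A v), monomial v (coeff v g)

open Classical in
lemma red_coeff (A : Set (Fin n →₀ ℕ)) (g : MvPolynomial (Fin n) K) (v : Fin n →₀ ℕ) :
    coeff v (red A g) = if v ∈ g.support ∧ ¬ stair A v then coeff v g else 0 := by
  rw [red, coeff_sum]
  simp only [coeff_monomial]
  rw [Finset.sum_ite_eq' (g.support.filter (fun v => ¬ stair A v)) v (fun w => coeff w g)]
  simp [Finset.mem_filter]

open Classical in
lemma red_support (A : Set (Fin n →₀ ℕ)) (g : MvPolynomial (Fin n) K) :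
    (red A g).support = g.support.filter (fun v => ¬ stair A v) := by
  ext v
  rw [MvPolynomial.mem_support_iff, red_coeff, Finset.mem_filter]
  by_cases hv : v ∈ g.support ∧ ¬ stair A v
  · rw [if_pos hv]
    simpa [hv.1, hv.2] using MvPolynomial.mem_support_iff.mp hv.1
  · rw [if_neg hv]
    simp only [ne_eq, not_true_eq_false]
    tauto

lemma sub_red_mem (A : Set (Fin n →₀ ℕ)) (g : MvPolynomial (Fin n) K) :
    g - red A g ∈ mIdeal K A := by
  classical
  rw [mem_mIdeal_iff]
  intro v hv
  rw [MvPolynomial.mem_support_iff, coeff_sub, red_coeff] at hv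
  by_contra hstair
  by_cases hvg : v ∈ g.support
  · rw [if_pos ⟨hvg, hstair⟩] at hv
    simp at hv
  · rw [if_neg (by tauto)] at hv
    rw [MvPolynomial.mem_support_iff, not_not] at hvg
    simp [hvg] at hv

lemma lex_lt_iff' {x y : Fin n →₀ ℕ} :
    toLex x < toLex y ↔ ∃ j, (∀ d, d < j → x d = y d) ∧ x j < y j :=
  Finsupp.lex_def

lemma lex_add_cancel {v v' u u' : Fin n →₀ ℕ} (hv : toLex v' ≤ toLex v)
    (hu : toLex u' ≤ toLex u) (he : v' + u' = v + u) : v' = v ∧ u' = u := by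
  have hpt : ∀ j, v' j + u' j = v j + u j := by
    intro j
    have := DFunLike.congr_fun he j
    simpa [Finsupp.add_apply] using this
  rcases eq_or_lt_of_le hv with hveq | hvlt
  · have hv2 : v' = v := toLex.injective hveq
    subst hv2
    exact ⟨rfl, by ext j; have := hpt j; omega⟩
  · rcases eq_or_lt_of_le hu with hueq | hult
    · have hu2 : u' = u := toLex.injective hueq
      subst hu2
      have : v' = v := by ext j; have := hpt j; omega
      exact absurd (congrArg toLex this) (ne_of_lt hvlt)
    · exfalso
      obtain ⟨i₁, hA₁, hB₁⟩ := lex_lt_iff'.mp hvlt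
      obtain ⟨i₂, hA₂, hB₂⟩ := lex_lt_iff'.mp hult
      rcases lt_trichotomy i₁ i₂ with h | h | h
      · have := hA₂ i₁ h
        have := hpt i₁
        omega
      · subst h
        have := hpt i₁
        omega
      · have := hA₁ i₂ h
        have := hpt i₂
        omega

lemma coeff_mul_max {b g : MvPolynomial (Fin n) K} {vs us : Fin n →₀ ℕ}
    (hvmax : ∀ v ∈ b.support, toLex v ≤ toLex vs)
    (humax : ∀ u ∈ g.support, toLex u ≤ toLex us) :
    coeff (vs + us) (b * g) = coeff vs b * coeff us g := by
  classical
  rw [coeff_mul]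
  refine Finset.sum_eq_single_of_mem (vs, us) (Finset.HasAntidiagonal.mem_antidiagonal.mpr rfl) ?_
  · rintro ⟨v, u⟩ hmem hne
    by_cases hv : coeff v b = 0
    · simp [hv]
    by_cases hu : coeff u g = 0
    · simp [hu]
    exfalso
    apply hne
    have hsum : v + u = vs + us := Finset.HasAntidiagonal.mem_antidiagonal.mp hmem
    obtain ⟨h1, h2⟩ := lex_add_cancel (hvmax v (MvPolynomial.mem_support_iff.mpr hv))
      (humax u (MvPolynomial.mem_support_iff.mpr hu)) hsum
    rw [Prod.mk.injEq]
    exact ⟨h1, h2⟩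

/-- If a prime is the colon ideal of a monomial ideal by a polynomial, it is the colon
ideal by a single monomial outside the ideal. -/
theorem exists_monomial_colon (A : Set (Fin n →₀ ℕ))
    (p : Ideal (MvPolynomial (Fin n) K)) (hp : p.IsPrime) (f : MvPolynomial (Fin n) K)
    (hpf : ∀ r, r ∈ p ↔ f * r ∈ mIdeal K A) :
    ∃ a : Fin n →₀ ℕ, ¬ stair A a ∧
      ∀ r, r ∈ p ↔ (monomial a (1:K)) * r ∈ mIdeal K A := by
  classical
  have hone : (1 : MvPolynomial (Fin n) K) ∉ p := (Ideal.ne_top_iff_one p).mp hp.ne_top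
  have hfI : f ∉ mIdeal K A := by
    intro hf
    exact hone ((hpf 1).mpr (by rwa [mul_one]))
  set W : Set (MvPolynomial (Fin n) K) :=
    {h | h ≠ 0 ∧ (∀ v ∈ h.support, ¬ stair A v) ∧
      ∃ r, r ∉ p ∧ h - f * r ∈ mIdeal K A} with hW
  have hWmem : red A f ∈ W := by
    refine ⟨?_, ?_, 1, hone, ?_⟩
    · intro h0
      apply hfI
      have := sub_red_mem A f
      rwa [h0, sub_zero] at this
    · intro v hv
      rw [red_support] at hv
      exact (Finset.mem_filter.mp hv).2
    · rw [mul_one]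
      have := sub_red_mem A f
      have h2 := neg_mem this
      rwa [neg_sub] at h2
  have hSne : {m | ∃ h ∈ W, h.support.card = m}.Nonempty := ⟨_, red A f, hWmem, rfl⟩
  obtain ⟨h, hhW, hhc⟩ := Nat.sInf_mem hSne
  have hmin : ∀ h' ∈ W, sInf {m | ∃ h ∈ W, h.support.card = m} ≤ h'.support.card :=
    fun h' hh' => Nat.sInf_le ⟨h', hh', rfl⟩
  obtain ⟨hh0, hhred, r₀, hr₀, hdiff⟩ := hhW
  -- K1 : the annihilator of h is p
  have K1 : ∀ b, b ∈ p ↔ b * h ∈ mIdeal K A := by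
    intro b
    have hbh : b * h - f * (r₀ * b) ∈ mIdeal K A := by
      have hmm := Ideal.mul_mem_left _ b hdiff
      have : b * (h - f * r₀) = b * h - f * (r₀ * b) := by ring
      rwa [this] at hmm
    constructor
    · intro hb
      have h1 : f * (r₀ * b) ∈ mIdeal K A := (hpf _).mp (Ideal.mul_mem_left _ r₀ hb)
      have h2 := Ideal.add_mem _ hbh h1
      rwa [sub_add_cancel] at h2
    · intro hbh'
      have h1 : f * (r₀ * b) ∈ mIdeal K A := by
        have := Ideal.sub_mem _ hbh' hbh
        have heq : b * h - (b * h - f * (r₀ * b)) = f * (r₀ * b) := by ring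
        rwa [heq] at this
      rcases hp.mem_or_mem ((hpf _).mpr h1) with hr | hb
      · exact absurd hr hr₀
      · exact hb
  have hsne : h.support.Nonempty :=
    Finset.nonempty_iff_ne_empty.mpr (fun he => hh0 (MvPolynomial.support_eq_empty.mp he))
  obtain ⟨us, hus, humax⟩ := h.support.exists_max_image (fun v => toLex v) hsne
  -- Claim 2: p is a monomial ideal
  have claim2 : ∀ (m : ℕ) (b : MvPolynomial (Fin n) K), b.support.card ≤ m → b ∈ p →
      ∀ v ∈ b.support, (monomial v (1:K)) ∈ p := by
    intro m
    induction m with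
    | zero =>
      intro b hc hb v hv
      rw [Nat.le_zero, Finset.card_eq_zero] at hc
      rw [hc] at hv
      exact absurd hv (Finset.notMem_empty v)
    | succ m ih =>
      intro b hcard hb v hv
      obtain ⟨vs, hvs, hvmax⟩ := b.support.exists_max_image (fun v => toLex v) ⟨v, hv⟩
      have hcvs : coeff vs b ≠ 0 := MvPolynomial.mem_support_iff.mp hvs
      have hcus : coeff us h ≠ 0 := MvPolynomial.mem_support_iff.mp hus
      have hstair : stair A (vs + us) := by
        have hbh : b * h ∈ mIdeal K A := (K1 b).mp hb
        refine mem_mIdeal_iff.mp hbh (vs + us) ?_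
        rw [MvPolynomial.mem_support_iff, coeff_mul_max hvmax humax]
        exact mul_ne_zero hcvs hcus
      set b1 : MvPolynomial (Fin n) K := monomial vs (coeff vs b) with hb1def
      have hb1 : b1 ∈ p := by
        by_contra hb1n
        set q := red A (b1 * h) with hq
        have hql : b1 * h - q ∈ mIdeal K A := sub_red_mem _ _
        have hsupp : q.support ⊆ (h.support.image (fun u => vs + u)).erase (vs + us) := by
          intro w hw
          rw [hq, red_support, Finset.mem_filter] at hw
          obtain ⟨hw1, hw2⟩ := hw
          have hcw : coeff w (b1 * h) ≠ 0 := MvPolynomial.mem_support_iff.mp hw1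
          rw [hb1def, coeff_monomial_mul'] at hcw
          have hle : vs ≤ w := by
            by_contra hle
            rw [if_neg hle] at hcw
            exact hcw rfl
          rw [if_pos hle] at hcw
          have hwu : w - vs ∈ h.support := MvPolynomial.mem_support_iff.mpr (fun h0 => hcw (by rw [h0, mul_zero]))
          have hwrep : w = vs + (w - vs) := (add_tsub_cancel_of_le hle).symm
          refine Finset.mem_erase.mpr ⟨?_, ?_⟩
          · intro heq
            apply hw2
            rwa [heq]
          · rw [hwrep]
            exact Finset.mem_image_of_mem _ hwu
        have hqcard : q.support.card < h.support.card := by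
          have h1 : (vs + us) ∈ h.support.image (fun u => vs + u) :=
            Finset.mem_image_of_mem _ hus
          have h2 := Finset.card_le_card hsupp
          rw [Finset.card_erase_of_mem h1] at h2
          have h3 : (h.support.image (fun u => vs + u)).card ≤ h.support.card :=
            Finset.card_image_le
          have h4 : 0 < (h.support.image (fun u => vs + u)).card :=
            Finset.card_pos.mpr ⟨_, h1⟩
          omega
        by_cases hq0 : q = 0
        · apply hb1n
          apply (K1 b1).mpr
          have := hql
          rwa [hq0, sub_zero] at this
        · have hqW : q ∈ W := by
            refine ⟨hq0, ?_, r₀ * b1, ?_, ?_⟩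
            · intro w hw
              rw [hq, red_support, Finset.mem_filter] at hw
              exact hw.2
            · intro hmem
              rcases hp.mem_or_mem hmem with h1 | h1
              · exact hr₀ h1
              · exact hb1n h1
            · have hstep : b1 * h - f * (r₀ * b1) ∈ mIdeal K A := by
                have hmm := Ideal.mul_mem_left _ b1 hdiff
                have : b1 * (h - f * r₀) = b1 * h - f * (r₀ * b1) := by ring
                rwa [this] at hmm
              have := Ideal.sub_mem _ hstep hql
              have heq : b1 * h - f * (r₀ * b1) - (b1 * h - q) = q - f * (r₀ * b1) := by ring
              rwa [heq] at this
          have := hmin q hqW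
          omega
      have hmono_vs : monomial vs (1:K) ∈ p := by
        have hscale := Ideal.mul_mem_left _ (C (coeff vs b)⁻¹) hb1
        rwa [hb1def, C_mul_monomial, inv_mul_cancel₀ hcvs] at hscale
      rcases eq_or_ne v vs with rfl | hne
      · exact hmono_vs
      · have hbb1 : b - b1 ∈ p := Ideal.sub_mem _ hb hb1
        have hsupp' : (b - b1).support = b.support.erase vs := by
          ext w
          rw [MvPolynomial.mem_support_iff, Finset.mem_erase, MvPolynomial.mem_support_iff, coeff_sub, hb1def,
            coeff_monomial]
          by_cases hw : vs = w
          · subst hw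
            simp
          · rw [if_neg hw]
            simp only [sub_zero]
            constructor
            · intro hc
              exact ⟨fun he => hw he.symm, hc⟩
            · intro hc
              exact hc.2
        refine ih (b - b1) ?_ hbb1 v ?_
        · rw [hsupp', Finset.card_erase_of_mem hvs]
          omega
        · rw [hsupp']
          exact Finset.mem_erase.mpr ⟨hne, hv⟩
  -- Claim 3a
  have claim3a : ∀ b ∈ p, ∀ u ∈ h.support, (monomial u (1:K)) * b ∈ mIdeal K A := by
    intro b hb u hu
    rw [monomial_mul_mem_iff]
    intro v hv
    have hm := claim2 b.support.card b le_rfl hb v hv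
    have h1 := (K1 _).mp hm
    rw [monomial_mul_mem_iff] at h1
    have := h1 u hu
    rwa [add_comm] at this
  set J : (Fin n →₀ ℕ) → Ideal (MvPolynomial (Fin n) K) :=
    fun u => (mIdeal K A).colon (Ideal.span {monomial u (1:K)} : Set (MvPolynomial (Fin n) K)) with hJ
  have hJmem : ∀ u r, r ∈ J u ↔ (monomial u (1:K)) * r ∈ mIdeal K A := by
    intro u r
    rw [hJ, Ideal.mem_colon_span_singleton, mul_comm]
  have hpJ : ∀ u ∈ h.support, p ≤ J u :=
    fun u hu r hr => (hJmem u r).mpr (claim3a r hr u hu)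
  have hJp : (h.support.inf J) ≤ p := by
    intro b hb
    apply (K1 b).mpr
    have heq : b * h = ∑ u ∈ h.support, C (coeff u h) * ((monomial u (1:K)) * b) := by
      conv_lhs => rw [as_sum h]
      rw [Finset.mul_sum]
      refine Finset.sum_congr rfl fun u hu => ?_
      rw [← mul_assoc, C_mul_monomial, mul_one, mul_comm]
    rw [heq]
    exact Ideal.sum_mem _ fun u hu =>
      Ideal.mul_mem_left _ _ ((hJmem u b).mp (Finset.inf_le (f := J) hu hb))
  obtain ⟨u, hu, hJule⟩ := hp.inf_le'.mp hJp
  refine ⟨u, hhred u hu, fun r => ⟨fun hr => (hJmem u r).mp (hpJ u hu hr),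
    fun hr => hJule ((hJmem u r).mpr hr)⟩⟩

/-! ### Assembly: powers of the path ideal -/

/-- Sums of `k` edge vectors. -/
def kSums (n k : ℕ) : Set (Fin n →₀ ℕ) :=
  {d | ∃ l : Multiset (EIdx n), Multiset.card l = k ∧ (l.map ev).sum = d}

lemma mIdeal_mul (A B : Set (Fin n →₀ ℕ)) :
    mIdeal K A * mIdeal K B = mIdeal K (Set.image2 (· + ·) A B) := by
  rw [mIdeal, mIdeal, mIdeal, Ideal.span_mul_span']
  congr 1
  ext x
  constructor
  · rintro ⟨s, hs, t, ht, rfl⟩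
    obtain ⟨da, hda, rfl⟩ := hs
    obtain ⟨db, hdb, rfl⟩ := ht
    refine ⟨da + db, Set.mem_image2_of_mem hda hdb, ?_⟩
    show monomial (da + db) (1:K) = monomial da 1 * monomial db 1
    rw [monomial_mul, one_mul]
  · rintro ⟨d, hd, rfl⟩
    obtain ⟨da, hda, db, hdb, rfl⟩ := hd
    refine ⟨monomial da 1, ⟨da, hda, rfl⟩, monomial db 1, ⟨db, hdb, rfl⟩, ?_⟩
    show monomial da (1:K) * monomial db 1 = monomial (da + db) 1
    rw [monomial_mul, one_mul]

lemma mIdeal_pow (k : ℕ) :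
    (mIdeal K (Set.range (ev (n := n)))) ^ k = mIdeal K (kSums n k) := by
  induction k with
  | zero =>
    rw [pow_zero, Ideal.one_eq_top]
    symm
    rw [Ideal.eq_top_iff_one]
    have h0 : (0 : Fin n →₀ ℕ) ∈ kSums n 0 := ⟨0, by simp, by simp⟩
    have := monomial_mem_mIdeal_iff (K := K).mpr ⟨0, h0, le_rfl⟩
    rwa [monomial_zero', C_1] at this
  | succ k ih =>
    rw [pow_succ, ih, mIdeal_mul]
    congr 1
    ext d
    constructor
    · rintro ⟨x, ⟨l, hcard, rfl⟩, y, ⟨e, rfl⟩, rfl⟩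
      refine ⟨e ::ₘ l, by simp [hcard], ?_⟩
      show ((e ::ₘ l).map ev).sum = (l.map ev).sum + ev e
      rw [Multiset.map_cons, Multiset.sum_cons, add_comm]
    · rintro ⟨l, hcard, rfl⟩
      have hne : l ≠ 0 := by
        intro h0
        rw [h0] at hcard
        simp at hcard
      obtain ⟨e, he⟩ := Multiset.exists_mem_of_ne_zero hne
      refine ⟨((l.erase e).map ev).sum, ⟨l.erase e, ?_, rfl⟩, ev e, ⟨e, rfl⟩, ?_⟩
      · rw [Multiset.card_erase_of_mem he, hcard]
        rfl
      · show ((l.erase e).map ev).sum + ev e = (l.map ev).sum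
        conv_rhs => rw [← Multiset.cons_erase he]
        rw [Multiset.map_cons, Multiset.sum_cons, add_comm]

lemma stair_kSums_iff {k : ℕ} {a : Fin n →₀ ℕ} :
    stair (kSums n k) a ↔ Pack 0 k a := by
  constructor
  · rintro ⟨d, ⟨l, hcard, rfl⟩, hle⟩
    exact ⟨l, fun e _ => Nat.zero_le _, hcard, hle⟩
  · rintro ⟨l, _, hcard, hle⟩
    exact ⟨_, ⟨l, hcard, rfl⟩, hle⟩

lemma X_eq_monomial (j : Fin n) : (X j : MvPolynomial (Fin n) K) = monomial (single j 1) 1 := by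
  rw [← X_pow_eq_monomial, pow_one]

lemma monomial_ev (e : EIdx n) :
    (monomial (ev e) (1:K)) =
      X (⟨e.1, by omega⟩ : Fin n) * X (⟨e.1 + 1, by omega⟩ : Fin n) *
        X (⟨e.1 + 2, e.2⟩ : Fin n) := by
  rw [X_eq_monomial, X_eq_monomial, X_eq_monomial, monomial_mul, monomial_mul,
    one_mul, one_mul, ev]


lemma win_mk (e : EIdx n) (t : ℕ) (h : e.1 + t < n) (ht : t ≤ 2) :
    win e ⟨e.1 + t, h⟩ :=
  ⟨Nat.le_add_right _ _, show e.1 + t ≤ e.1 + 2 by omega⟩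

end PathNTF

open PathNTF Finsupp in
/-- The 3-path ideal `(x_i x_{i+1} x_{i+2} : i = 1, …, n-2)` of the path graph `P_n`
is normally torsion-free. -/
theorem path_ideal_ntf (K : Type*) [Field K] {n : ℕ} (hn : 3 ≤ n) :
    NormallyTorsionFree (Ideal.span
      { m : MvPolynomial (Fin n) K | ∃ i : ℕ, ∃ h : i + 2 < n,
        m = X (⟨i, by omega⟩ : Fin n) * X (⟨i + 1, by omega⟩ : Fin n) *
          X (⟨i + 2, h⟩ : Fin n) }) := by
  classical
  intro k hk P hP
  set SS : Set (MvPolynomial (Fin n) K) :=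
    { m : MvPolynomial (Fin n) K | ∃ i : ℕ, ∃ h : i + 2 < n,
        m = X (⟨i, by omega⟩ : Fin n) * X (⟨i + 1, by omega⟩ : Fin n) *
          X (⟨i + 2, h⟩ : Fin n) } with hSS
  have hLL : Ideal.span SS = mIdeal K (Set.range (ev (n := n))) := by
    rw [mIdeal]
    congr 1
    ext m
    constructor
    · rintro ⟨i, h, rfl⟩
      exact ⟨ev ⟨i, h⟩, ⟨⟨i, h⟩, rfl⟩, monomial_ev ⟨i, h⟩⟩
    · rintro ⟨d, ⟨e, rfl⟩, rfl⟩
      exact ⟨e.1, e.2, monomial_ev e⟩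
  obtain ⟨hprime, x, hx⟩ := isAssociatedPrime_iff.mp hP
  obtain ⟨f, rfl⟩ := Ideal.Quotient.mkₐ_surjective (MvPolynomial (Fin n) K) _ x
  have hpf : ∀ r, r ∈ P ↔ f * r ∈ mIdeal K (kSums n k) := by
    intro r
    rw [hx, Submodule.mem_colon_singleton, Submodule.mem_bot, ← map_smul, smul_eq_mul,
      Ideal.Quotient.mkₐ_eq_mk, ← Ideal.Quotient.mk_eq_mk, Submodule.Quotient.mk_eq_zero,
      hLL, mIdeal_pow, mul_comm]
  obtain ⟨a, hnst, hPa⟩ := exists_monomial_colon _ P hprime f hpf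
  have hnot : ¬ Pack 0 k a := fun hpk => hnst (stair_kSums_iff.mpr hpk)
  set S : Finset (Fin n) :=
    Finset.univ.filter (fun j : Fin n => (monomial (single j 1) (1:K)) ∈ P) with hSdef
  have hSmem : ∀ j, j ∈ S ↔ (monomial (single j 1) (1:K)) ∈ P := by
    intro j
    rw [hSdef, Finset.mem_filter]
    simp
  have hSpack : ∀ j ∈ S, Pack 0 k (a + single j 1) := by
    intro j hj
    have h1 := (hPa _).mp ((hSmem j).mp hj)
    rw [monomial_mul, one_mul] at h1
    exact stair_kSums_iff.mp (monomial_mem_mIdeal_iff.mp h1)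
  have hcover : ∀ e : EIdx n, ∃ j ∈ S, win e j := by
    intro e
    have hgk : (monomial (ev e) (1:K)) ^ k ∈ mIdeal K (kSums n k) := by
      rw [monomial_pow, one_pow]
      refine monomial_mem_mIdeal_iff.mpr
        ⟨k • ev e, ⟨Multiset.replicate k e, ?_, ?_⟩, le_rfl⟩
      · simp
      · rw [Multiset.map_replicate, Multiset.sum_replicate]
    have hgP : (monomial (ev e) (1:K)) ^ k ∈ P :=
      (hPa _).mpr (Ideal.mul_mem_left _ _ hgk)
    have hg : (monomial (ev e) (1:K)) ∈ P := hprime.mem_of_pow_mem _ hgP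
    have hsplit : (monomial (single (⟨e.1, by omega⟩ : Fin n) 1) (1:K)) *
        monomial (single (⟨e.1+1, by omega⟩ : Fin n) 1) 1 *
        monomial (single (⟨e.1+2, e.2⟩ : Fin n) 1) 1 ∈ P := by
      rw [monomial_mul, monomial_mul, one_mul, one_mul]
      exact hg
    rcases hprime.mem_or_mem hsplit with h12 | h3
    · rcases hprime.mem_or_mem h12 with h1 | h2
      · exact ⟨_, (hSmem _).mpr h1, win_mk e 0 (by omega) (by omega)⟩
      · exact ⟨_, (hSmem _).mpr h2, win_mk e 1 (by omega) (by omega)⟩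
    · exact ⟨_, (hSmem _).mpr h3, win_mk e 2 e.2 (by omega)⟩
  obtain ⟨C, hCcov, hCpack⟩ := dual ((n - 0) + ∑ j, a j) 0 a le_rfl
  have hwk : ∑ j ∈ C, a j < k := by
    by_contra hge
    push_neg at hge
    exact hnot (pack_mono_card hCpack hge)
  have hSC : S ⊆ C := by
    intro j hj
    by_contra hjC
    obtain ⟨l, hl0, hlcard, hlsum⟩ := hSpack j hj
    have hcnt := count_le l C (a + single j 1) (fun e _ => hCcov e (Nat.zero_le _)) hlsum
    rw [hlcard] at hcnt
    have hsum : ∑ j' ∈ C, (a + single j 1 : Fin n →₀ ℕ) j' =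
        (∑ j' ∈ C, a j') + ∑ j' ∈ C, (single j 1 : Fin n →₀ ℕ) j' := by
      rw [← Finset.sum_add_distrib]
      exact Finset.sum_congr rfl fun j' _ => Finsupp.add_apply _ _ _
    have hzero : ∑ j' ∈ C, (single j 1 : Fin n →₀ ℕ) j' = 0 := by
      refine Finset.sum_eq_zero fun j' hj' => ?_
      rw [single_apply, if_neg]
      intro heq
      exact hjC (heq ▸ hj')
    omega
  have hSw : ∑ j ∈ S, a j < k :=
    lt_of_le_of_lt (Finset.sum_le_sum_of_subset hSC) hwk
  set b : Fin n →₀ ℕ := ∑ j ∈ Finset.univ \ S, single j 1 with hbdef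
  have hb : ∀ j, b j = if j ∈ S then 0 else 1 := by
    intro j
    rw [hbdef, Finsupp.finset_sum_apply,
      Finset.sum_congr rfl (fun j' _ => single_apply (a := j') (b := (1:ℕ)) (a' := j)),
      Finset.sum_ite_eq' (Finset.univ \ S) j (fun _ => 1)]
    by_cases hj : j ∈ S
    · rw [if_neg (by simp [hj]), if_pos hj]
    · rw [if_pos (by simp [hj]), if_neg hj]
  have hfinal : ∀ r, r ∈ P ↔
      (monomial b (1:K)) * r ∈ mIdeal K (Set.range (ev (n := n))) := by
    intro r
    constructor
    · intro hr
      rw [monomial_mul_mem_iff]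
      intro v hv
      have h1 := (hPa r).mp hr
      rw [monomial_mul_mem_iff] at h1
      obtain ⟨d, ⟨l, hlcard, rfl⟩, hle⟩ := h1 v hv
      by_contra hno
      have hSe : ∀ e ∈ l, ∃ j ∈ S.filter (fun j => v j = 0), win e j := by
        intro e he
        by_contra hns
        push_neg at hns
        apply hno
        refine ⟨ev e, ⟨e, rfl⟩, ?_⟩
        intro j
        rw [ev_apply]
        split_ifs with hw
        · rw [Finsupp.add_apply]
          by_cases hjS : j ∈ S
          · have hv0 : v j ≠ 0 := fun h0 => (hns j (Finset.mem_filter.mpr ⟨hjS, h0⟩)) hw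
            have hbj := hb j
            rw [if_pos hjS] at hbj
            omega
          · have hbj := hb j
            rw [if_neg hjS] at hbj
            omega
        · exact Nat.zero_le _
      have hcnt := count_le l (S.filter (fun j => v j = 0)) _ hSe le_rfl
      rw [hlcard] at hcnt
      have h2 : ∑ j ∈ S.filter (fun j => v j = 0), ((l.map ev).sum) j ≤
          ∑ j ∈ S.filter (fun j => v j = 0), a j := by
        refine Finset.sum_le_sum fun j hj => ?_
        have h3 := hle j
        rw [Finsupp.add_apply] at h3
        have h4 : v j = 0 := (Finset.mem_filter.mp hj).2
        omega
      have h5 : ∑ j ∈ S.filter (fun j => v j = 0), a j ≤ ∑ j ∈ S, a j :=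
        Finset.sum_le_sum_of_subset (Finset.filter_subset _ _)
      omega
    · intro hr
      have hmem : ∀ v ∈ r.support, monomial v (coeff v r) ∈ P := by
        intro v hv
        obtain ⟨d, ⟨e, rfl⟩, hle⟩ := monomial_mul_mem_iff.mp hr v hv
        obtain ⟨j, hjS, hwin⟩ := hcover e
        have hbj := hb j
        rw [if_pos hjS] at hbj
        have hev := ev_apply_of_win e j hwin
        have hlej := hle j
        rw [Finsupp.add_apply] at hlej
        have hvj : 1 ≤ v j := by omega
        have hsingle : single j 1 ≤ v := by
          intro j'
          rw [single_apply]
          split_ifs with hj'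
          · exact hj' ▸ hvj
          · exact Nat.zero_le _
        have hrepr : monomial v (coeff v r) =
            monomial (v - single j 1) (coeff v r) * monomial (single j 1) (1:K) := by
          rw [monomial_mul, mul_one, tsub_add_cancel_of_le hsingle]
        rw [hrepr]
        exact Ideal.mul_mem_left _ _ ((hSmem j).mp hjS)
      rw [as_sum r]
      exact Ideal.sum_mem _ fun v hv => hmem v hv
  refine isAssociatedPrime_iff.mpr ⟨hprime, Submodule.Quotient.mk (monomial b (1:K)), ?_⟩
  ext r
  rw [Submodule.mem_colon_singleton, Submodule.mem_bot, ← Submodule.Quotient.mk_smul,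
    Submodule.Quotient.mk_eq_zero, smul_eq_mul, hLL, mul_comm]
  exact hfinal r
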